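/- Let R be a unital ring and let φ : R → R be an additive map satisfying condition (P). Then φ(1) commutes with every idempotent of R: for every P ∈ R with P·P = P, one has P·φ(1) = φ(1)·P. -/
import Mathlib


theorem phi_one_commutes_with_idempotents
    {R : Type*} [Ring R]
    (φ : R →+ R)
    (hP : ∀ U V : R, U * V = 0 → V * U = 0 →
      φ U * V + V * φ U + U * φ V + φ V * U = 0) :
    ∀ P : R, P * P = P → P * φ 1 = φ 1 * P := by
  intro P hPP
  have h1 : P * (1 - P) = 0 := by rw [mul_sub, mul_one, hPP, sub_self]
  have h2 : (1 - P) * P = 0 := by rw [sub_mul, one_mul, hPP, sub_self]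
  have h := hP P (1 - P) h1 h2
  rw [map_sub] at h
  have hPP' : ∀ x : R, P * (P * x) = P * x := fun x => by rw [← mul_assoc, hPP]
  have hL := congrArg (fun x => P * x) h
  have hR := congrArg (fun x => x * P) h
  simp only [mul_add, add_mul, mul_sub, sub_mul, mul_zero, zero_mul, mul_one, one_mul,
    mul_assoc, hPP, hPP'] at hL hR
  have := sub_eq_zero.mpr (hL.trans hR.symm)
  -- now massage
  abel_nf at this
  rw [neg_one_zsmul, ← sub_eq_add_neg, sub_eq_zero] at this
  exact this
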